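/- Let d ≥ 1, let A_1,…,A_s and B_1,…,B_s be real d×d matrices, h > 0, and p_{n+1} ∈ ℝ^d. Suppose ξ̃^(1),…,ξ̃^(s), ξ^(1),…,ξ^(s) ∈ ℝ^d satisfy the discrete adjoint system of (SRK2): ξ̃^(i) = h ω̃_i p_{n+1} + h Σ_{j=1}^{s} ã_{ji} (A_j ξ̃^(j) + B_j ξ^(j)) and ξ^(i) = h ω_i p_{n+1} + h Σ_{j=1}^{s} a_{ji} (A_j ξ̃^(j) + B_j ξ^(j)) for i = 1,…,s, together with p_n = p_{n+1} + Σ_{i=1}^{s} (A_i ξ̃^(i) + B_i ξ^(i)). Define the transformed stage values P̃^(i) := ξ̃^(i)/(h ω̃_i) and P^(i) := ξ^(i)/(h ω_i). Then (P̃^(i), P^(i), p_n, p_{n+1}) satisfy the adjoint IMEX Runge–Kutta scheme (ARK): P̃^(i) = p_n − h Σ_{j=1}^{s} α̃_{ij} A_j P̃^(j) − h Σ_{j=1}^{s} α_{ij} B_j P^(j), P^(i) = p_n − h Σ_{j=1}^{s} β̃_{ij} A_j P̃^(j) − h Σ_{j=1}^{s} β_{ij} B_j P^(j) for i = 1,…,s,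 and p_{n+1} = p_n − h Σ_{i=1}^{s} ω̃_i A_i P̃^(i) − h Σ_{i=1}^{s} ω_i B_i P^(i). -/
import Mathlib


open Finset Matrix

/-- The discrete adjoint system of (SRK2) is, after the variable transformation
`P̃^(i) = ξ̃^(i)/(h ω̃_i)`, `P^(i) = ξ^(i)/(h ω_i)`, equivalent to the adjoint
IMEX Runge–Kutta scheme (ARK). -/
theorem adjoint_srk2_to_ark (s d : ℕ) (hs : 1 ≤ s) (hd : 1 ≤ d)
    (ta a : Fin s → Fin s → ℝ) (tw w : Fin s → ℝ)
    (hta : ∀ i j : Fin s, i ≤ j → ta i j = 0)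
    (ha : ∀ i j : Fin s, i < j → a i j = 0)
    (htw : ∀ i, tw i ≠ 0) (hw : ∀ i, w i ≠ 0)
    (tα α tβ β : Fin s → Fin s → ℝ)
    (htα : ∀ i j, tα i j = tw j - (tw j / tw i) * ta j i)
    (hα : ∀ i j, α i j = w j - (w j / tw i) * ta j i)
    (htβ : ∀ i j, tβ i j = tw j - (tw j / w i) * a j i)
    (hβ : ∀ i j, β i j = w j - (w j / w i) * a j i)
    (A B : Fin s → Matrix (Fin d) (Fin d) ℝ)
    (h : ℝ) (hh : 0 < h) (pn1 : Fin d → ℝ)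
    (tξ ξ : Fin s → Fin d → ℝ)
    (hξ1 : ∀ i, tξ i = (h * tw i) • pn1
        + h • ∑ j, ta j i • (A j *ᵥ tξ j + B j *ᵥ ξ j))
    (hξ2 : ∀ i, ξ i = (h * w i) • pn1
        + h • ∑ j, a j i • (A j *ᵥ tξ j + B j *ᵥ ξ j))
    (pn : Fin d → ℝ)
    (hpn : pn = pn1 + ∑ i, (A i *ᵥ tξ i + B i *ᵥ ξ i))
    (tP P : Fin s → Fin d → ℝ)
    (htP : ∀ i, tP i = (h * tw i)⁻¹ • tξ i)
    (hP : ∀ i, P i = (h * w i)⁻¹ • ξ i) :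
    (∀ i, tP i = pn - h • ∑ j, tα i j • (A j *ᵥ tP j)
                    - h • ∑ j, α i j • (B j *ᵥ P j)) ∧
    (∀ i, P i = pn - h • ∑ j, tβ i j • (A j *ᵥ tP j)
                   - h • ∑ j, β i j • (B j *ᵥ P j)) ∧
    pn1 = pn - h • ∑ i, tw i • (A i *ᵥ tP i) - h • ∑ i, w i • (B i *ᵥ P i) := by
  have hne : h ≠ 0 := ne_of_gt hh
  have htξ' : ∀ i, tξ i = (h * tw i) • tP i := fun i => by
    rw [htP i, smul_inv_smul₀ (mul_ne_zero hne (htw i))]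
  have hξ' : ∀ i, ξ i = (h * w i) • P i := fun i => by
    rw [hP i, smul_inv_smul₀ (mul_ne_zero hne (hw i))]
  have hAξ : ∀ j, A j *ᵥ tξ j = (h * tw j) • (A j *ᵥ tP j) := fun j => by
    rw [htξ' j, Matrix.mulVec_smul]
  have hBξ : ∀ j, B j *ᵥ ξ j = (h * w j) • (B j *ᵥ P j) := fun j => by
    rw [hξ' j, Matrix.mulVec_smul]
  have hpn' : pn = pn1
      + ∑ j, ((h * tw j) • (A j *ᵥ tP j) + (h * w j) • (B j *ᵥ P j)) := by
    rw [hpn]; congr 1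
    exact Finset.sum_congr rfl fun j _ => by rw [hAξ, hBξ]
  have hξ1' : ∀ i, tξ i = (h * tw i) • pn1
      + h • ∑ j, ta j i • ((h * tw j) • (A j *ᵥ tP j) + (h * w j) • (B j *ᵥ P j)) := by
    intro i; rw [hξ1 i]; congr 2
    exact Finset.sum_congr rfl fun j _ => by rw [hAξ, hBξ]
  have hξ2' : ∀ i, ξ i = (h * w i) • pn1
      + h • ∑ j, a j i • ((h * tw j) • (A j *ᵥ tP j) + (h * w j) • (B j *ᵥ P j)) := by
    intro i; rw [hξ2 i]; congr 2
    exact Finset.sum_congr rfl fun j _ => by rw [hAξ, hBξ]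
  refine ⟨?_, ?_, ?_⟩
  · intro i
    rw [htP i, hξ1' i, hpn']
    funext x
    simp only [Pi.smul_apply, Pi.add_apply, Pi.sub_apply, Finset.sum_apply, smul_eq_mul]
    have e1 : ∑ j, ta j i * ((h * tw j) * (A j *ᵥ tP j) x + (h * w j) * (B j *ᵥ P j) x)
        = h * (∑ j, ta j i * tw j * (A j *ᵥ tP j) x)
          + h * (∑ j, ta j i * w j * (B j *ᵥ P j) x) := by
      rw [Finset.mul_sum, Finset.mul_sum, ← Finset.sum_add_distrib]
      exact Finset.sum_congr rfl fun j _ => by ring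
    have e2 : ∑ j, ((h * tw j) * (A j *ᵥ tP j) x + (h * w j) * (B j *ᵥ P j) x)
        = h * (∑ j, tw j * (A j *ᵥ tP j) x) + h * (∑ j, w j * (B j *ᵥ P j) x) := by
      rw [Finset.mul_sum, Finset.mul_sum, ← Finset.sum_add_distrib]
      exact Finset.sum_congr rfl fun j _ => by ring
    have e3 : ∑ j, tα i j * (A j *ᵥ tP j) x
        = (∑ j, tw j * (A j *ᵥ tP j) x)
          - (tw i)⁻¹ * (∑ j, ta j i * tw j * (A j *ᵥ tP j) x) := by
      rw [Finset.mul_sum, ← Finset.sum_sub_distrib]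
      exact Finset.sum_congr rfl fun j _ => by rw [htα]; ring
    have e4 : ∑ j, α i j * (B j *ᵥ P j) x
        = (∑ j, w j * (B j *ᵥ P j) x)
          - (tw i)⁻¹ * (∑ j, ta j i * w j * (B j *ᵥ P j) x) := by
      rw [Finset.mul_sum, ← Finset.sum_sub_distrib]
      exact Finset.sum_congr rfl fun j _ => by rw [hα]; ring
    rw [e1, e2, e3, e4]
    field_simp [hne, htw i]
    ring
  · intro i
    rw [hP i, hξ2' i, hpn']
    funext x
    simp only [Pi.smul_apply, Pi.add_apply, Pi.sub_apply, Finset.sum_apply, smul_eq_mul]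
    have e1 : ∑ j, a j i * ((h * tw j) * (A j *ᵥ tP j) x + (h * w j) * (B j *ᵥ P j) x)
        = h * (∑ j, a j i * tw j * (A j *ᵥ tP j) x)
          + h * (∑ j, a j i * w j * (B j *ᵥ P j) x) := by
      rw [Finset.mul_sum, Finset.mul_sum, ← Finset.sum_add_distrib]
      exact Finset.sum_congr rfl fun j _ => by ring
    have e2 : ∑ j, ((h * tw j) * (A j *ᵥ tP j) x + (h * w j) * (B j *ᵥ P j) x)
        = h * (∑ j, tw j * (A j *ᵥ tP j) x) + h * (∑ j, w j * (B j *ᵥ P j) x) := by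
      rw [Finset.mul_sum, Finset.mul_sum, ← Finset.sum_add_distrib]
      exact Finset.sum_congr rfl fun j _ => by ring
    have e3 : ∑ j, tβ i j * (A j *ᵥ tP j) x
        = (∑ j, tw j * (A j *ᵥ tP j) x)
          - (w i)⁻¹ * (∑ j, a j i * tw j * (A j *ᵥ tP j) x) := by
      rw [Finset.mul_sum, ← Finset.sum_sub_distrib]
      exact Finset.sum_congr rfl fun j _ => by rw [htβ]; ring
    have e4 : ∑ j, β i j * (B j *ᵥ P j) x
        = (∑ j, w j * (B j *ᵥ P j) x)
          - (w i)⁻¹ * (∑ j, a j i * w j * (B j *ᵥ P j) x) := by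
      rw [Finset.mul_sum, ← Finset.sum_sub_distrib]
      exact Finset.sum_congr rfl fun j _ => by rw [hβ]; ring
    rw [e1, e2, e3, e4]
    field_simp [hne, hw i]
    ring
  · rw [hpn']
    funext x
    simp only [Pi.smul_apply, Pi.add_apply, Pi.sub_apply, Finset.sum_apply, smul_eq_mul]
    have e2 : ∑ j, ((h * tw j) * (A j *ᵥ tP j) x + (h * w j) * (B j *ᵥ P j) x)
        = h * (∑ j, tw j * (A j *ᵥ tP j) x) + h * (∑ j, w j * (B j *ᵥ P j) x) := by
      rw [Finset.mul_sum, Finset.mul_sum, ← Finset.sum_add_distrib]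
      exact Finset.sum_congr rfl fun j _ => by ring
    rw [e2]
    ring
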